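/- Let G be a finite group whose power graph is a cograph, and suppose the socle of G contains two distinct nonabelian simple direct factors, or a nontrivial abelian direct factor together with a nonabelian simple direct factor. Then a contradiction arises; equivalently, the socle of a finite power-cograph group is either abelian or a single nonabelian simple group. -/

import Mathlib

/-- The power graph of a group: `g` and `h` are adjacent iff they are distinct and
one is a power (integer power) of the other. -/
def powerGraph (G : Type*) [Group G] : SimpleGraph G where
  Adj g h := g ≠ h ∧ (h ∈ Subgroup.zpowers g ∨ g ∈ Subgroup.zpowers h)
  symm := ⟨fun g h ⟨hne, hor⟩ => ⟨hne.symm, hor.symm⟩⟩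
  loopless := ⟨fun g h => h.1 rfl⟩

/-- `a, b, c, d` induce a path on four vertices in `Γ`. -/
def InducedP4 {V : Type*} (Γ : SimpleGraph V) (a b c d : V) : Prop :=
  a ≠ c ∧ a ≠ d ∧ b ≠ d ∧ Γ.Adj a b ∧ Γ.Adj b c ∧ Γ.Adj c d ∧
    ¬Γ.Adj a c ∧ ¬Γ.Adj a d ∧ ¬Γ.Adj b d

/-- A graph is a cograph iff it has no induced `P4`. -/
def IsCograph {V : Type*} (Γ : SimpleGraph V) : Prop :=
  ∀ a b c d : V, ¬ InducedP4 Γ a b c d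

/-- The prime graph (Gruenberg–Kegel graph) of a group, as a graph on `ℕ`. -/
def primeGraph (G : Type*) [Group G] : SimpleGraph ℕ where
  Adj p q := p ≠ q ∧ p.Prime ∧ q.Prime ∧ ∃ g : G, orderOf g = p * q
  symm := ⟨fun p q ⟨hne, hp, hq, g, hg⟩ => ⟨hne.symm, hq, hp, g, by rwa [Nat.mul_comm]⟩⟩
  loopless := ⟨fun p h => h.1 rfl⟩

/-- A minimal normal subgroup. -/
def IsMinimalNormal {G : Type*} [Group G] (H : Subgroup G) : Prop :=
  H.Normal ∧ H ≠ ⊥ ∧ ∀ K : Subgroup G, K.Normal → K < H → K = ⊥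

/-- The socle: the subgroup generated by all minimal normal subgroups. -/
def socle (G : Type*) [Group G] : Subgroup G :=
  ⨆ H ∈ {H : Subgroup G | IsMinimalNormal H}, H

namespace PGC
open Subgroup
open scoped commutatorElement

variable {G : Type*} [Group G]

lemma powerGraph_adj {g h : G} :
    (powerGraph G).Adj g h ↔ g ≠ h ∧ (h ∈ zpowers g ∨ g ∈ zpowers h) := Iff.rfl

lemma ne_one_of_orderOf_prime {a : G} {p : ℕ} (hp : p.Prime) (ha : orderOf a = p) : a ≠ 1 := by
  intro h
  rw [h, orderOf_one] at ha
  exact hp.one_lt.ne' ha.symm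

lemma mem_zpowers_mul_pair {a s : G} (h : Commute a s)
    (hco : Nat.Coprime (orderOf a) (orderOf s)) :
    a ∈ zpowers (a * s) ∧ s ∈ zpowers (a * s) := by
  obtain ⟨u, v, huv⟩ := (Int.isCoprime_iff_gcd_eq_one.2 (by
    simpa [Int.gcd_natCast_natCast] using hco) : IsCoprime (orderOf a : ℤ) (orderOf s : ℤ))
  have hA : a ^ (orderOf a : ℤ) = 1 := by
    rw [zpow_natCast, pow_orderOf_eq_one]
  have hS : s ^ (orderOf s : ℤ) = 1 := by
    rw [zpow_natCast, pow_orderOf_eq_one]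
  constructor
  · refine ⟨v * (orderOf s : ℤ), ?_⟩
    show (a * s) ^ (v * (orderOf s : ℤ)) = a
    rw [h.mul_zpow]
    have h1 : s ^ (v * (orderOf s : ℤ)) = 1 := by
      rw [mul_comm, zpow_mul, hS, one_zpow]
    have h2 : a ^ (v * (orderOf s : ℤ)) = a := by
      have : v * (orderOf s : ℤ) = 1 - u * (orderOf a : ℤ) := by linarith
      rw [this, zpow_sub, zpow_one, mul_comm u (orderOf a : ℤ), zpow_mul, hA, one_zpow,
        inv_one, mul_one]
    rw [h1, h2, mul_one]
  · refine ⟨u * (orderOf a : ℤ), ?_⟩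
    show (a * s) ^ (u * (orderOf a : ℤ)) = s
    rw [h.mul_zpow]
    have h1 : a ^ (u * (orderOf a : ℤ)) = 1 := by
      rw [mul_comm, zpow_mul, hA, one_zpow]
    have h2 : s ^ (u * (orderOf a : ℤ)) = s := by
      have : u * (orderOf a : ℤ) = 1 - v * (orderOf s : ℤ) := by linarith
      rw [this, zpow_sub, zpow_one, mul_comm v (orderOf s : ℤ), zpow_mul, hS, one_zpow,
        inv_one, mul_one]
    rw [h1, h2, one_mul]

lemma not_adj_of_orders {x y : G} (hx : ¬ orderOf y ∣ orderOf x) (hy : ¬ orderOf x ∣ orderOf y) :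
    ¬ (powerGraph G).Adj x y := by
  rintro ⟨-, h | h⟩
  · exact hx (orderOf_dvd_of_mem_zpowers h)
  · exact hy (orderOf_dvd_of_mem_zpowers h)

/-- The triple lemma: an element of prime order `p` commuting with elements of
distinct prime orders `q`, `r` yields an induced `P4`. -/
lemma no_triple (hco : IsCograph (powerGraph G)) {a s t : G} {p q r : ℕ}
    (hp : p.Prime) (hq : q.Prime) (hr : r.Prime)
    (hpq : p ≠ q) (hpr : p ≠ r) (hqr : q ≠ r)
    (ha : orderOf a = p) (hs : orderOf s = q) (ht : orderOf t = r)
    (has : Commute a s) (hat : Commute a t) : False := by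
  have ha1 : a ≠ 1 := ne_one_of_orderOf_prime hp ha
  have hs1 : s ≠ 1 := ne_one_of_orderOf_prime hq hs
  have ht1 : t ≠ 1 := ne_one_of_orderOf_prime hr ht
  have hcopq : Nat.Coprime (orderOf a) (orderOf s) := by
    rw [ha, hs]; exact (Nat.coprime_primes hp hq).2 hpq
  have hcopr : Nat.Coprime (orderOf a) (orderOf t) := by
    rw [ha, ht]; exact (Nat.coprime_primes hp hr).2 hpr
  have hos : orderOf (a * s) = p * q := by
    rw [← ha, ← hs]; exact has.orderOf_mul_eq_mul_orderOf_of_coprime hcopq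
  have hot : orderOf (a * t) = p * r := by
    rw [← ha, ← ht]; exact hat.orderOf_mul_eq_mul_orderOf_of_coprime hcopr
  have hmem1 := mem_zpowers_mul_pair has hcopq
  have hmem2 := mem_zpowers_mul_pair hat hcopr
  apply hco s (a * s) a (a * t)
  refine ⟨?_, ?_, ?_, ?_, ?_, ?_, ?_, ?_, ?_⟩
  · -- s ≠ a
    intro h; exact hpq (by rw [← ha, ← h, hs])
  · -- s ≠ a * t
    intro h
    have hq' : q = p * r := by rw [← hs, h, hot]
    have : p ∣ q := hq' ▸ dvd_mul_right p r
    exact hpq ((Nat.prime_dvd_prime_iff_eq hp hq).1 this)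
  · -- a * s ≠ a * t
    intro h; exact hqr (by rw [← hs, ← ht, mul_left_cancel h])
  · -- Adj s (a*s)
    refine ⟨?_, Or.inr hmem1.2⟩
    intro h
    exact ha1 (mul_right_cancel (b := s) (by rw [← h, one_mul]))
  · -- Adj (a*s) a
    refine ⟨?_, Or.inl hmem1.1⟩
    intro h
    exact hs1 (mul_left_cancel (a := a) (by rw [h, mul_one]))
  · -- Adj a (a*t)
    refine ⟨?_, Or.inr hmem2.1⟩
    intro h
    exact ht1 (mul_left_cancel (a := a) (by rw [← h, mul_one]))
  · -- ¬ Adj s a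
    apply not_adj_of_orders <;> rw [ha, hs]
    · exact fun h => hpq ((Nat.prime_dvd_prime_iff_eq hp hq).1 h)
    · exact fun h => hpq ((Nat.prime_dvd_prime_iff_eq hq hp).1 h).symm
  · -- ¬ Adj s (a*t)
    apply not_adj_of_orders <;> rw [hs, hot]
    · intro h
      have : p ∣ q := dvd_trans (dvd_mul_right p r) h
      exact hpq ((Nat.prime_dvd_prime_iff_eq hp hq).1 this)
    · intro h
      rcases (Nat.Prime.dvd_mul hq).1 h with h' | h'
      · exact hpq ((Nat.prime_dvd_prime_iff_eq hq hp).1 h').symm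
      · exact hqr ((Nat.prime_dvd_prime_iff_eq hq hr).1 h')
  · -- ¬ Adj (a*s) (a*t)
    apply not_adj_of_orders <;> rw [hos, hot]
    · intro h
      have : r ∣ p * q := dvd_trans (dvd_mul_left r p) h
      rcases (Nat.Prime.dvd_mul hr).1 this with h' | h'
      · exact hpr ((Nat.prime_dvd_prime_iff_eq hr hp).1 h').symm
      · exact hqr ((Nat.prime_dvd_prime_iff_eq hr hq).1 h').symm
    · intro h
      have : q ∣ p * r := dvd_trans (dvd_mul_left q p) h
      rcases (Nat.Prime.dvd_mul hq).1 this with h' | h'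
      · exact hpq ((Nat.prime_dvd_prime_iff_eq hq hp).1 h').symm
      · exact hqr ((Nat.prime_dvd_prime_iff_eq hq hr).1 h')

/-- Two elements of the same prime order `p` (generating distinct cyclic subgroups),
both commuting with an element of prime order `q ≠ p`, yield an induced `P4`,
provided mixed products only meet `⟨v⟩` trivially. -/
lemma p4core (hco : IsCograph (powerGraph G)) {u w v : G} {p q : ℕ}
    (hp : p.Prime) (hq : q.Prime) (hpq : p ≠ q)
    (hu : orderOf u = p) (hw : orderOf w = p) (hv : orderOf v = q)
    (huv : Commute u v) (hwv : Commute w v)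
    (hnu : u ∉ zpowers w) (hnw : w ∉ zpowers u)
    (h4 : ∀ i j k : ℤ, w ^ j * u ^ i = v ^ k → v ^ k = 1)
    (h4' : ∀ i j k : ℤ, u ^ i * w ^ j = v ^ k → v ^ k = 1) : False := by
  have hu1 : u ≠ 1 := ne_one_of_orderOf_prime hp hu
  have hw1 : w ≠ 1 := ne_one_of_orderOf_prime hp hw
  have hv1 : v ≠ 1 := ne_one_of_orderOf_prime hq hv
  have hcop : Nat.Coprime (orderOf u) (orderOf v) := by
    rw [hu, hv]; exact (Nat.coprime_primes hp hq).2 hpq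
  have hcop' : Nat.Coprime (orderOf w) (orderOf v) := by
    rw [hw, hv]; exact (Nat.coprime_primes hp hq).2 hpq
  have hmem1 := mem_zpowers_mul_pair huv hcop
  have hmem2 := mem_zpowers_mul_pair hwv hcop'
  apply hco u (u * v) v (w * v)
  refine ⟨?_, ?_, ?_, ?_, ?_, ?_, ?_, ?_, ?_⟩
  · -- u ≠ v
    intro h; apply hpq; rw [← hu, h, hv]
  · -- u ≠ w * v
    intro h
    have h1 : w ^ (-1 : ℤ) * u ^ (1 : ℤ) = v ^ (1 : ℤ) := by
      rw [zpow_one, zpow_one, zpow_neg_one, h]; group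
    have := h4 _ _ _ h1
    rw [zpow_one] at this
    exact hv1 this
  · -- u * v ≠ w * v
    intro h
    exact hnw (by rw [← mul_right_cancel h]; exact mem_zpowers u)
  · -- Adj u (u * v)
    refine ⟨?_, Or.inr hmem1.1⟩
    intro h
    exact hv1 (mul_left_cancel (a := u) (by rw [← h, mul_one]))
  · -- Adj (u * v) v
    refine ⟨?_, Or.inl hmem1.2⟩
    intro h
    exact hu1 (mul_right_cancel (b := v) (by rw [h, one_mul]))
  · -- Adj v (w * v)
    refine ⟨?_, Or.inr hmem2.2⟩
    intro h
    exact hw1 (mul_right_cancel (b := v) (by rw [← h, one_mul]))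
  · -- ¬ Adj u v
    rintro ⟨-, h | h⟩
    · rw [mem_zpowers_iff] at h
      obtain ⟨k, hk⟩ := h
      have := h4' k 0 1 (by rw [zpow_zero, mul_one, zpow_one, hk])
      rw [zpow_one] at this
      exact hv1 this
    · rw [mem_zpowers_iff] at h
      obtain ⟨k, hk⟩ := h
      have := h4' 1 0 k (by rw [zpow_zero, mul_one, zpow_one, hk])
      exact hu1 (by rw [← hk, this])
  · -- ¬ Adj u (w * v)
    rintro ⟨-, h | h⟩
    · rw [mem_zpowers_iff] at h
      obtain ⟨k, hk⟩ := h  -- u ^ k = w * v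
      have h1 : w ^ (-1 : ℤ) * u ^ k = v ^ (1 : ℤ) := by
        rw [zpow_neg_one, zpow_one, hk]; group
      have := h4 _ _ _ h1
      rw [zpow_one] at this
      exact hv1 this
    · rw [mem_zpowers_iff] at h
      obtain ⟨k, hk⟩ := h  -- (w * v) ^ k = u
      rw [hwv.mul_zpow] at hk
      have h1 : w ^ (-k) * u ^ (1 : ℤ) = v ^ k := by
        rw [zpow_one, zpow_neg, ← hk]; group
      rw [h4 _ _ _ h1] at h1
      have : w ^ k = u := by
        rw [zpow_one, zpow_neg] at h1
        exact inv_mul_eq_one.mp h1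
      exact hnu (mem_zpowers_iff.mpr ⟨k, this⟩)
  · -- ¬ Adj (u * v) (w * v)
    rintro ⟨-, h | h⟩
    · rw [mem_zpowers_iff] at h
      obtain ⟨k, hk⟩ := h  -- (u * v) ^ k = w * v
      rw [huv.mul_zpow] at hk
      have hw' : w = u ^ k * v ^ k * v⁻¹ := by rw [hk]; group
      have h1 : u ^ (-k) * w ^ (1 : ℤ) = v ^ (k - 1) := by
        rw [zpow_one, zpow_neg, hw']; group
      rw [h4' _ _ _ h1] at h1
      have : u ^ k = w := by
        rw [zpow_one, zpow_neg] at h1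
        exact inv_mul_eq_one.mp h1
      exact hnw (mem_zpowers_iff.mpr ⟨k, this⟩)
    · rw [mem_zpowers_iff] at h
      obtain ⟨k, hk⟩ := h  -- (w * v) ^ k = u * v
      rw [hwv.mul_zpow] at hk
      have hu' : u = w ^ k * v ^ k * v⁻¹ := by rw [hk]; group
      have h1 : w ^ (-k) * u ^ (1 : ℤ) = v ^ (k - 1) := by
        rw [zpow_one, zpow_neg, hu']; group
      rw [h4 _ _ _ h1] at h1
      have : w ^ k = u := by
        rw [zpow_one, zpow_neg] at h1
        exact inv_mul_eq_one.mp h1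
      exact hnu (mem_zpowers_iff.mpr ⟨k, this⟩)

variable [Finite G]

lemma exists_mem_orderOf_eq_prime_of_dvd (K : Subgroup G) {p : ℕ} (hp : p.Prime)
    (h : p ∣ Nat.card ↥K) : ∃ x ∈ K, orderOf x = p := by
  haveI : Fintype ↥K := Fintype.ofFinite _
  haveI : Fact p.Prime := ⟨hp⟩
  rw [Nat.card_eq_fintype_card] at h
  obtain ⟨x, hx⟩ := exists_prime_orderOf_dvd_card (G := ↥K) p h
  exact ⟨(x : G), x.2, by rw [← hx]; exact orderOf_injective K.subtype K.subtype_injective x⟩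

lemma exists_mem_orderOf_prime (A : Subgroup G) (hA : A ≠ ⊥) :
    ∃ a ∈ A, ∃ p, p.Prime ∧ orderOf a = p := by
  obtain ⟨x, hxA, hx1⟩ : ∃ x ∈ A, x ≠ 1 := by
    by_contra h
    push_neg at h
    exact hA ((Subgroup.eq_bot_iff_forall A).2 h)
  set n := orderOf x with hn
  have hn1 : n ≠ 1 := by simpa [hn, orderOf_eq_one_iff] using hx1
  have hn0 : n ≠ 0 := (orderOf_pos x).ne'
  set p := n.minFac with hpdef
  have hp : p.Prime := Nat.minFac_prime hn1
  refine ⟨x ^ (n / p), A.pow_mem hxA _, p, hp, ?_⟩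
  rw [orderOf_pow, ← hn, Nat.gcd_eq_right (Nat.div_dvd_of_dvd n.minFac_dvd),
    Nat.div_div_self n.minFac_dvd hn0]

lemma commutator_coe_top (B : Subgroup G) (hperf : ⁅B, B⁆ = B) :
    _root_.commutator ↥B = ⊤ := by
  apply Subgroup.map_injective B.subtype_injective
  rw [_root_.commutator_def, map_commutator, ← MonoidHom.range_eq_map, B.range_subtype, hperf]

lemma not_isSolvable_of_perfect (B : Subgroup G) (hB : B ≠ ⊥) (hperf : ⁅B, B⁆ = B) :
    ¬ IsSolvable ↥B := by
  intro hsolv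
  have htop : ∀ m, derivedSeries ↥B m = ⊤ := by
    intro m
    induction m with
    | zero => rfl
    | succ m ih => rw [derivedSeries_succ, ih, ← _root_.commutator_def, commutator_coe_top B hperf]
  obtain ⟨m, hm⟩ := (isSolvable_def ↥B).1 hsolv
  haveI : Nontrivial ↥B := (Subgroup.nontrivial_iff_ne_bot B).2 hB
  obtain ⟨y, hy⟩ := exists_ne (1 : ↥B)
  have : y ∈ derivedSeries ↥B m := (htop m).symm ▸ Subgroup.mem_top y
  rw [hm, Subgroup.mem_bot] at this
  exact hy this

lemma perfect_two_primes (B : Subgroup G) (hB : B ≠ ⊥) (hperf : ⁅B, B⁆ = B) :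
    ∃ q r, q.Prime ∧ r.Prime ∧ q ≠ r ∧ q ∣ Nat.card ↥B ∧ r ∣ Nat.card ↥B := by
  by_contra hcon
  push_neg at hcon
  set n := Nat.card ↥B with hndef
  have hn0 : n ≠ 0 := Nat.card_pos.ne'
  have hn1 : n ≠ 1 := by
    intro h
    haveI : Nontrivial ↥B := (Subgroup.nontrivial_iff_ne_bot B).2 hB
    have := Finite.one_lt_card_iff_nontrivial.2 (inferInstance : Nontrivial ↥B)
    omega
  set p := n.minFac with hpdef
  have hp : p.Prime := Nat.minFac_prime hn1
  have huniq : ∀ {d : ℕ}, d.Prime → d ∣ n → d = p := by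
    intro d hd hdvd
    by_contra hne
    exact hne (hcon d p hd hp (fun h => hne h) hdvd n.minFac_dvd).elim
  have hcard : n = p ^ n.primeFactorsList.length :=
    Nat.eq_prime_pow_of_unique_prime_dvd hn0 huniq
  haveI : Fact p.Prime := ⟨hp⟩
  have hpg : IsPGroup p ↥B := IsPGroup.of_card hcard
  haveI : Group.IsNilpotent ↥B := hpg.isNilpotent
  exact not_isSolvable_of_perfect B hB hperf (inferInstance : Group.IsSolvable ↥B)

lemma mem_bot_of_inf_bot {A B : Subgroup G} (hdisj : A ⊓ B = ⊥) {x : G}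
    (hxA : x ∈ A) (hxB : x ∈ B) : x = 1 := by
  have : x ∈ A ⊓ B := Subgroup.mem_inf.2 ⟨hxA, hxB⟩
  rwa [hdisj, Subgroup.mem_bot] at this

lemma zpowers_eq_of_mem_of_orderOf_eq {x t : G} (h : x ∈ zpowers t)
    (ho : orderOf x = orderOf t) : zpowers x = zpowers t := by
  refine Subgroup.eq_of_le_of_card_ge (zpowers_le.2 h) ?_
  rw [Nat.card_zpowers, Nat.card_zpowers, ho]

/-- `K` is a normal subgroup of `M` (as subgroups of the ambient group). -/
def NIn (M K : Subgroup G) : Prop :=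
  K ≤ M ∧ ∀ m ∈ M, ∀ k ∈ K, m * k * m⁻¹ ∈ K

/-- `K` is a minimal normal subgroup of `M`. -/
def MinNIn (M K : Subgroup G) : Prop :=
  NIn M K ∧ K ≠ ⊥ ∧ ∀ K' : Subgroup G, NIn M K' → K' < K → K' = ⊥

lemma NIn.inf {M K₁ K₂ : Subgroup G} (h₁ : NIn M K₁) (h₂ : NIn M K₂) : NIn M (K₁ ⊓ K₂) :=
  ⟨inf_le_left.trans h₁.1, fun m hm k hk =>
    Subgroup.mem_inf.2 ⟨h₁.2 m hm k (Subgroup.mem_inf.1 hk).1, h₂.2 m hm k (Subgroup.mem_inf.1 hk).2⟩⟩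

lemma NIn.commute_of_inf_bot {M K₁ K₂ : Subgroup G} (h₁ : NIn M K₁) (h₂ : NIn M K₂)
    (hdisj : K₁ ⊓ K₂ = ⊥) {a b : G} (ha : a ∈ K₁) (hb : b ∈ K₂) : Commute a b := by
  rw [← commutatorElement_eq_one_iff_commute]
  apply mem_bot_of_inf_bot hdisj
  · -- ⁅a, b⁆ ∈ K₁ : a * (b * a⁻¹ * b⁻¹)
    have : b * a⁻¹ * b⁻¹ ∈ K₁ := h₁.2 b (h₂.1 hb) a⁻¹ (inv_mem ha)
    have := mul_mem ha this
    simpa [commutatorElement_def, mul_assoc] using this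
  · -- ⁅a, b⁆ ∈ K₂ : (a * b * a⁻¹) * b⁻¹
    have : a * b * a⁻¹ ∈ K₂ := h₂.2 a (h₁.1 ha) b hb
    have := mul_mem this (inv_mem hb)
    simpa [commutatorElement_def, mul_assoc] using this

lemma MinNIn.inf_eq_bot {M K₁ K₂ : Subgroup G} (h₁ : MinNIn M K₁) (h₂ : MinNIn M K₂)
    (hne : K₁ ≠ K₂) : K₁ ⊓ K₂ = ⊥ := by
  rcases lt_or_eq_of_le (inf_le_left : K₁ ⊓ K₂ ≤ K₁) with h | h
  · exact h₁.2.2 _ (h₁.1.inf h₂.1) h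
  · -- K₁ ⊓ K₂ = K₁, so K₁ ≤ K₂, so K₁ < K₂
    have hle : K₁ ≤ K₂ := h ▸ inf_le_right
    have := h₂.2.2 K₁ h₁.1 (lt_of_le_of_ne hle hne)
    exact absurd this h₁.2.1

lemma MinNIn.commute_of_ne {M K₁ K₂ : Subgroup G} (h₁ : MinNIn M K₁) (h₂ : MinNIn M K₂)
    (hne : K₁ ≠ K₂) {a b : G} (ha : a ∈ K₁) (hb : b ∈ K₂) : Commute a b :=
  h₁.1.commute_of_inf_bot h₂.1 (h₁.inf_eq_bot h₂ hne) ha hb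

lemma exists_minNIn (M L : Subgroup G) (hL : NIn M L) (hLbot : L ≠ ⊥) :
    ∃ K : Subgroup G, K ≤ L ∧ MinNIn M K := by
  set S : Set (Subgroup G) := {K | K ≠ ⊥ ∧ NIn M K ∧ K ≤ L} with hS
  have hne : S.Nonempty := ⟨L, hLbot, hL, le_refl L⟩
  obtain ⟨K, hKS, hKmin⟩ :=
    (Finite.to_wellFoundedLT (α := Subgroup G)).wf.has_min S hne
  refine ⟨K, hKS.2.2, hKS.2.1, hKS.1, ?_⟩
  intro K' hK' hlt
  by_contra hK'bot
  exact hKmin K' ⟨hK'bot, hK', hlt.le.trans hKS.2.2⟩ hlt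

/-- Conjugation of subgroups. -/
def cmap (g : G) (K : Subgroup G) : Subgroup G := K.map (MulAut.conj g).toMonoidHom

lemma mem_cmap {g x : G} {K : Subgroup G} : x ∈ cmap g K ↔ ∃ k ∈ K, g * k * g⁻¹ = x := by
  simp [cmap, Subgroup.mem_map, MulAut.conj_apply]

lemma cmap_cmap (g h : G) (K : Subgroup G) : cmap g (cmap h K) = cmap (g * h) K := by
  ext x
  simp only [mem_cmap]
  constructor
  · rintro ⟨y, ⟨k, hk, rfl⟩, rfl⟩
    exact ⟨k, hk, by group⟩
  · rintro ⟨k, hk, rfl⟩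
    exact ⟨h * k * h⁻¹, ⟨k, hk, rfl⟩, by group⟩

lemma cmap_one (K : Subgroup G) : cmap 1 K = K := by
  ext x; simp [mem_cmap]

lemma cmap_le_cmap {K L : Subgroup G} (g : G) (h : K ≤ L) : cmap g K ≤ cmap g L :=
  Subgroup.map_mono h

lemma cmap_inv_cmap (g : G) (K : Subgroup G) : cmap g⁻¹ (cmap g K) = K := by
  rw [cmap_cmap, inv_mul_cancel, cmap_one]

lemma cmap_le_iff {K L : Subgroup G} {g : G} : cmap g K ≤ cmap g L ↔ K ≤ L := by
  constructor
  · intro h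
    have := cmap_le_cmap g⁻¹ h
    rwa [cmap_inv_cmap, cmap_inv_cmap] at this
  · exact cmap_le_cmap g

lemma cmap_bot (g : G) : cmap g (⊥ : Subgroup G) = ⊥ := by
  ext x; simp [mem_cmap, eq_comm]

lemma cmap_eq_bot_iff {g : G} {K : Subgroup G} : cmap g K = ⊥ ↔ K = ⊥ := by
  constructor
  · intro h
    have := congrArg (cmap g⁻¹) h
    rwa [cmap_inv_cmap, cmap_bot] at this
  · rintro rfl; exact cmap_bot g

lemma cmap_lt_iff {K L : Subgroup G} {g : G} : cmap g K < cmap g L ↔ K < L := by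
  rw [lt_iff_le_not_ge, lt_iff_le_not_ge, cmap_le_iff, cmap_le_iff]

lemma NIn.cmap_eq_of_mem {M K : Subgroup G} (h : NIn M K) {m : G} (hm : m ∈ M) :
    cmap m K = K := by
  apply le_antisymm
  · rintro x hx
    rw [mem_cmap] at hx
    obtain ⟨k, hk, rfl⟩ := hx
    exact h.2 m hm k hk
  · intro k hk
    rw [mem_cmap]
    exact ⟨m⁻¹ * k * m, by simpa using h.2 m⁻¹ (inv_mem hm) k hk, by group⟩

lemma NIn.cmap {M K : Subgroup G} (h : NIn M K) (g : G) : NIn (cmap g M) (cmap g K) := by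
  constructor
  · exact cmap_le_cmap g h.1
  · intro m hm k hk
    rw [mem_cmap] at hm hk ⊢
    obtain ⟨m', hm', rfl⟩ := hm
    obtain ⟨k', hk', rfl⟩ := hk
    exact ⟨m' * k' * m'⁻¹, h.2 m' hm' k' hk', by group⟩

lemma MinNIn.cmap {M K : Subgroup G} (h : MinNIn M K) (g : G) :
    MinNIn (PGC.cmap g M) (PGC.cmap g K) := by
  refine ⟨h.1.cmap g, fun hb => h.2.1 (cmap_eq_bot_iff.1 hb), ?_⟩
  intro K' hK' hlt
  have h1 : NIn M (PGC.cmap g⁻¹ K') := by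
    have := hK'.cmap g⁻¹
    rwa [cmap_inv_cmap] at this
  have h2 : PGC.cmap g⁻¹ K' < K := by
    have := cmap_lt_iff (g := g⁻¹).2 hlt
    rwa [cmap_inv_cmap] at this
  have h3 := h.2.2 _ h1 h2
  have := congrArg (PGC.cmap g) h3
  rwa [cmap_cmap, mul_inv_cancel, cmap_one, cmap_bot] at this

lemma orderOf_conj_mul (g t : G) : orderOf (g * t * g⁻¹) = orderOf t := by
  have h : g * t * g⁻¹ = (MulAut.conj g) t := by rw [MulAut.conj_apply]
  rw [h]
  exact orderOf_injective (MulAut.conj g).toMonoidHom (MulEquiv.injective _) t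

/-- The central contradiction: two elementwise-commuting subgroups meeting trivially,
with `A` nontrivial and `B` perfect and nontrivial, contradict the cograph property. -/
lemma crunch (hco : IsCograph (powerGraph G)) (A B : Subgroup G)
    (hAB : ∀ a ∈ A, ∀ b ∈ B, Commute a b)
    (hdisj : A ⊓ B = ⊥) (hA : A ≠ ⊥) (hBperf : ⁅B, B⁆ = B) (hBbot : B ≠ ⊥) : False := by
  obtain ⟨a, haA, p, hp, hap⟩ := exists_mem_orderOf_prime A hA
  obtain ⟨q, r, hq, hr, hqr, hqd, hrd⟩ := perfect_two_primes B hBbot hBperf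
  have ha1 : a ≠ 1 := ne_one_of_orderOf_prime hp hap
  by_cases hcase : p ≠ q ∧ p ≠ r
  · obtain ⟨s, hsB, hs⟩ := exists_mem_orderOf_eq_prime_of_dvd B hq hqd
    obtain ⟨t, htB, ht⟩ := exists_mem_orderOf_eq_prime_of_dvd B hr hrd
    exact no_triple hco hp hq hr hcase.1 hcase.2 hqr hap hs ht
      (hAB a haA s hsB) (hAB a haA t htB)
  · -- p ∈ {q, r}; let r' be the other prime of B
    have hpB : p ∣ Nat.card ↥B := by
      rcases not_and_or.1 hcase with h | h
      · rw [not_not.1 h]; exact hqd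
      · rw [not_not.1 h]; exact hrd
    obtain ⟨r', hr', hr'd, hr'p⟩ : ∃ r', r'.Prime ∧ r' ∣ Nat.card ↥B ∧ r' ≠ p := by
      rcases not_and_or.1 hcase with h | h
      · exact ⟨r, hr, hrd, fun hh => hqr (by rw [← not_not.1 h, hh])⟩
      · exact ⟨q, hq, hqd, fun hh => hqr (by rw [hh, ← not_not.1 h])⟩
    have hcop' : Nat.Coprime p r' := (Nat.coprime_primes hp hr').2 (fun h => hr'p h.symm)
    obtain ⟨t, htB, ht⟩ := exists_mem_orderOf_eq_prime_of_dvd B hr' hr'd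
    by_cases hall : ∀ x ∈ B, orderOf x = r' → x ∈ zpowers t
    · -- t is central in B
      have hcent : ∀ b ∈ B, Commute b t := by
        have hBle : B ≤ centralizer {t} := by
          conv_lhs => rw [← hBperf]
          rw [commutator_le]
          intro g1 hg1 g2 hg2
          have key : ∀ g ∈ B, ∃ e : ℤ, g * t * g⁻¹ = t ^ e := by
            intro g hg
            have h1 : orderOf (g * t * g⁻¹) = r' := by rw [orderOf_conj_mul, ht]
            have h2 : g * t * g⁻¹ ∈ B := mul_mem (mul_mem hg htB) (inv_mem hg)
            obtain ⟨e, he⟩ := mem_zpowers_iff.1 (hall _ h2 h1)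
            exact ⟨e, he.symm⟩
          obtain ⟨e1, he1⟩ := key g1 hg1
          obtain ⟨e2, he2⟩ := key g2 hg2
          set x := g1 * g2 with hx
          set y := g2 * g1 with hy
          have c12 : x * t * x⁻¹ = t ^ (e1 * e2) := by
            have hxe : x * t * x⁻¹ = g1 * (g2 * t * g2⁻¹) * g1⁻¹ := by rw [hx]; group
            rw [hxe, he2, ← conj_zpow, he1, ← zpow_mul]
          have c21 : y * t * y⁻¹ = t ^ (e2 * e1) := by
            have hye : y * t * y⁻¹ = g2 * (g1 * t * g1⁻¹) * g2⁻¹ := by rw [hy]; group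
            rw [hye, he1, ← conj_zpow, he2, ← zpow_mul]
          have ceq : (x * y⁻¹) * (y * t * y⁻¹) * (x * y⁻¹)⁻¹ = y * t * y⁻¹ := by
            have h0 : (x * y⁻¹) * (y * t * y⁻¹) * (x * y⁻¹)⁻¹ = x * t * x⁻¹ := by group
            rw [h0, c12, c21, mul_comm e1 e2]
          have hcomm' : Commute (x * y⁻¹) (y * t * y⁻¹) :=
            mul_inv_eq_iff_eq_mul.mp ceq
          -- t generates the same subgroup as y * t * y⁻¹
          have hmemz : y * t * y⁻¹ ∈ zpowers t := mem_zpowers_iff.2 ⟨e2 * e1, c21.symm⟩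
          have hoeq : orderOf (y * t * y⁻¹) = orderOf t := orderOf_conj_mul y t
          have hzeq : zpowers (y * t * y⁻¹) = zpowers t :=
            zpowers_eq_of_mem_of_orderOf_eq hmemz hoeq
          obtain ⟨m, hm⟩ := mem_zpowers_iff.1 (hzeq ▸ mem_zpowers t :
            t ∈ zpowers (y * t * y⁻¹))
          have hct : Commute (x * y⁻¹) t := by
            rw [← hm]; exact hcomm'.zpow_right m
          have hcg : ⁅g1, g2⁆ = x * y⁻¹ := by
            rw [commutatorElement_def, hx, hy]; group
          rw [hcg]
          apply Subgroup.mem_centralizer_iff.2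
          intro h' hh'
          rw [Set.mem_singleton_iff] at hh'
          subst hh'
          exact hct.symm.eq
        intro b hb
        exact (Subgroup.mem_centralizer_iff.1 (hBle hb) t rfl).symm
      obtain ⟨s, hsB, hs⟩ := exists_mem_orderOf_eq_prime_of_dvd B hp hpB
      have hs1 : s ≠ 1 := ne_one_of_orderOf_prime hp hs
      have key4 : ∀ i j k : ℤ, s ^ j * a ^ i = t ^ k → t ^ k = 1 := by
        intro i j k h
        have hai : a ^ i = (s ^ j)⁻¹ * t ^ k := by rw [← h]; group
        have haone : a ^ i = 1 := mem_bot_of_inf_bot hdisj (A.zpow_mem haA i)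
          (hai ▸ mul_mem (inv_mem (B.zpow_mem hsB j)) (B.zpow_mem htB k))
        have hsj : s ^ j = t ^ k := by
          rw [← h, haone, mul_one]
        have h1 : orderOf (t ^ k) ∣ r' := by
          rw [← ht]; exact orderOf_dvd_of_mem_zpowers (mem_zpowers_iff.2 ⟨k, rfl⟩)
        have h2 : orderOf (t ^ k) ∣ p := by
          rw [← hs]; exact orderOf_dvd_of_mem_zpowers (mem_zpowers_iff.2 ⟨j, hsj⟩)
        exact orderOf_eq_one_iff.1 (Nat.eq_one_of_dvd_coprimes hcop' h2 h1)
      have key4' : ∀ i j k : ℤ, a ^ i * s ^ j = t ^ k → t ^ k = 1 := by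
        intro i j k h
        have hai : a ^ i = t ^ k * (s ^ j)⁻¹ := by rw [← h]; group
        have haone : a ^ i = 1 := mem_bot_of_inf_bot hdisj (A.zpow_mem haA i)
          (hai ▸ mul_mem (B.zpow_mem htB k) (inv_mem (B.zpow_mem hsB j)))
        have hsj : s ^ j = t ^ k := by
          rw [← h, haone, one_mul]
        have h1 : orderOf (t ^ k) ∣ r' := by
          rw [← ht]; exact orderOf_dvd_of_mem_zpowers (mem_zpowers_iff.2 ⟨k, rfl⟩)
        have h2 : orderOf (t ^ k) ∣ p := by
          rw [← hs]; exact orderOf_dvd_of_mem_zpowers (mem_zpowers_iff.2 ⟨j, hsj⟩)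
        exact orderOf_eq_one_iff.1 (Nat.eq_one_of_dvd_coprimes hcop' h2 h1)
      refine p4core hco hp hr' (fun h => hr'p h.symm) hap hs ht
        (hAB a haA t htB) (hcent s hsB) ?_ ?_ key4 key4'
      · intro hmem
        exact ha1 (mem_bot_of_inf_bot hdisj haA (zpowers_le.2 hsB hmem))
      · intro hmem
        exact hs1 (mem_bot_of_inf_bot hdisj (zpowers_le.2 haA hmem) hsB)
    · push_neg at hall
      obtain ⟨x, hxB, hx, hxt⟩ := hall
      have key4 : ∀ i j k : ℤ, x ^ j * t ^ i = a ^ k → a ^ k = 1 := by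
        intro i j k h
        exact mem_bot_of_inf_bot hdisj (A.zpow_mem haA k)
          (h ▸ mul_mem (B.zpow_mem hxB j) (B.zpow_mem htB i))
      have key4' : ∀ i j k : ℤ, t ^ i * x ^ j = a ^ k → a ^ k = 1 := by
        intro i j k h
        exact mem_bot_of_inf_bot hdisj (A.zpow_mem haA k)
          (h ▸ mul_mem (B.zpow_mem htB i) (B.zpow_mem hxB j))
      refine p4core hco hr' hp hr'p ht hx hap
        ((hAB a haA t htB).symm) ((hAB a haA x hxB).symm) ?_ hxt key4 key4'
      · intro hmem
        have := zpowers_eq_of_mem_of_orderOf_eq hmem (by rw [ht, hx])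
        exact hxt (by rw [this]; exact mem_zpowers x)

lemma normal_iff_nin_top {H : Subgroup G} : H.Normal ↔ NIn ⊤ H := by
  constructor
  · intro h
    exact ⟨le_top, fun m _ k hk => h.conj_mem k hk m⟩
  · intro h
    exact ⟨fun k hk g => h.2 g trivial k hk⟩

lemma isMinimalNormal_iff_minNIn {H : Subgroup G} : IsMinimalNormal H ↔ MinNIn ⊤ H := by
  constructor
  · rintro ⟨h1, h2, h3⟩
    exact ⟨normal_iff_nin_top.1 h1, h2, fun K' hK' hlt => h3 K' (normal_iff_nin_top.2 hK') hlt⟩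
  · rintro ⟨h1, h2, h3⟩
    exact ⟨normal_iff_nin_top.2 h1, h2, fun K hK hlt => h3 K (normal_iff_nin_top.1 hK) hlt⟩

lemma socle_comm
    (hall : ∀ H : Subgroup G, IsMinimalNormal H → ∀ x ∈ H, ∀ y ∈ H, Commute x y) :
    ∀ a ∈ socle G, ∀ b ∈ socle G, Commute a b := by
  have hpair : ∀ H H' : Subgroup G, IsMinimalNormal H → IsMinimalNormal H' →
      ∀ x ∈ H, ∀ y ∈ H', Commute x y := by
    intro H H' hH hH' x hx y hy
    by_cases he : H = H'
    · subst he; exact hall H hH x hx y hy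
    · exact (isMinimalNormal_iff_minNIn.1 hH).commute_of_ne
        (isMinimalNormal_iff_minNIn.1 hH') he hx hy
  have step1 : ∀ H : Subgroup G, IsMinimalNormal H → ∀ x ∈ H, ∀ b ∈ socle G, Commute x b := by
    intro H hH x hx b hb
    have hsle : socle G ≤ centralizer {x} := by
      refine iSup_le fun H' => iSup_le fun hH' => ?_
      intro y hy
      exact Subgroup.mem_centralizer_iff.2 fun z hz => by
        rw [Set.mem_singleton_iff] at hz
        rw [hz]
        exact (hpair H H' hH hH' x hx y hy).eq
    have := Subgroup.mem_centralizer_iff.1 (hsle hb) x rfl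
    exact this
  intro a ha b hb
  have hsle : socle G ≤ centralizer {b} := by
    refine iSup_le fun H => iSup_le fun hH => ?_
    intro x hx
    exact Subgroup.mem_centralizer_iff.2 fun z hz => by
      rw [Set.mem_singleton_iff] at hz
      rw [hz]
      exact (step1 H hH x hx b hb).symm.eq
  exact (Subgroup.mem_centralizer_iff.1 (hsle ha) b rfl).symm

lemma perfect_of_minNIn {M K : Subgroup G} (h : MinNIn M K)
    (hnab : ¬ ∀ x ∈ K, ∀ y ∈ K, Commute x y) : ⁅K, K⁆ = K := by
  have hle : ⁅K, K⁆ ≤ K := commutator_le.2 fun g1 h1 g2 h2 => by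
    rw [commutatorElement_def]
    exact mul_mem (mul_mem (mul_mem h1 h2) (inv_mem h1)) (inv_mem h2)
  have hNIn : NIn M ⁅K, K⁆ := by
    refine ⟨hle.trans h.1.1, fun m hm k hk => ?_⟩
    have hcm : cmap m ⁅K, K⁆ = ⁅K, K⁆ := by
      show Subgroup.map _ ⁅K, K⁆ = ⁅K, K⁆
      rw [map_commutator]
      show ⁅cmap m K, cmap m K⁆ = ⁅K, K⁆
      rw [h.1.cmap_eq_of_mem hm]
    rw [← hcm]
    exact mem_cmap.2 ⟨k, hk, rfl⟩
  rcases lt_or_eq_of_le hle with hlt | heq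
  · exfalso
    have hbot := h.2.2 _ hNIn hlt
    apply hnab
    intro x hx y hy
    rw [← commutatorElement_eq_one_iff_commute, ← Subgroup.mem_bot, ← hbot]
    exact commutator_le.1 (le_refl ⁅K, K⁆) x hx y hy
  · exact heq

lemma cmap_iSup {ι : Sort*} (m : G) (f : ι → Subgroup G) :
    cmap m (⨆ i, f i) = ⨆ i, cmap m (f i) :=
  (Subgroup.gc_map_comap (MulAut.conj m).toMonoidHom).l_iSup

lemma minnormal_simple (hco : IsCograph (powerGraph G)) {M : Subgroup G}
    (hM : MinNIn ⊤ M) (hnab : ¬ ∀ x ∈ M, ∀ y ∈ M, Commute x y) :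
    ∀ L : Subgroup G, NIn M L → L = ⊥ ∨ L = M := by
  intro L hL
  by_cases hLbot : L = ⊥
  · exact Or.inl hLbot
  right
  obtain ⟨K, hKL, hK⟩ := exists_minNIn M L hL hLbot
  have hMcmap : ∀ g : G, cmap g M = M := fun g => hM.1.cmap_eq_of_mem (Subgroup.mem_top g)
  have hKg : ∀ g : G, MinNIn M (cmap g K) := by
    intro g
    have := hK.cmap g
    rwa [hMcmap g] at this
  by_cases hKab : ∀ x ∈ K, ∀ y ∈ K, Commute x y
  · -- K abelian: the normal closure of K in G is all of M, but it is abelian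
    exfalso
    set NC := ⨆ g : G, cmap g K with hNC
    have hpair : ∀ g h : G, ∀ x ∈ cmap g K, ∀ y ∈ cmap h K, Commute x y := by
      intro g h x hx y hy
      by_cases hgh : cmap g K = cmap h K
      · rw [← hgh] at hy
        obtain ⟨k1, hk1, rfl⟩ := mem_cmap.1 hx
        obtain ⟨k2, hk2, rfl⟩ := mem_cmap.1 hy
        have hc := hKab k1 hk1 k2 hk2
        show _ = _
        calc g * k1 * g⁻¹ * (g * k2 * g⁻¹) = g * (k1 * k2) * g⁻¹ := by group
        _ = g * (k2 * k1) * g⁻¹ := by rw [hc.eq]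
        _ = g * k2 * g⁻¹ * (g * k1 * g⁻¹) := by group
      · exact (hKg g).commute_of_ne (hKg h) hgh hx hy
    have hcomm : ∀ x ∈ NC, ∀ y ∈ NC, Commute x y := by
      have step1 : ∀ g : G, ∀ x ∈ cmap g K, ∀ y ∈ NC, Commute x y := by
        intro g x hx y hy
        have hsle : NC ≤ centralizer {x} := by
          refine iSup_le fun h => ?_
          intro y' hy'
          exact Subgroup.mem_centralizer_iff.2 fun z hz => by
            rw [Set.mem_singleton_iff] at hz
            rw [hz]
            exact (hpair g h x hx y' hy').eq
        exact Subgroup.mem_centralizer_iff.1 (hsle hy) x rfl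
      intro x hx y hy
      have hsle : NC ≤ centralizer {y} := by
        refine iSup_le fun g => ?_
        intro x' hx'
        exact Subgroup.mem_centralizer_iff.2 fun z hz => by
          rw [Set.mem_singleton_iff] at hz
          rw [hz]
          exact (step1 g x' hx' y hy).symm.eq
      exact (Subgroup.mem_centralizer_iff.1 (hsle hx) y rfl).symm
    have hNCle : NC ≤ M := iSup_le fun g => by
      rw [← hMcmap g]; exact cmap_le_cmap g hK.1.1
    have hNCbot : NC ≠ ⊥ := by
      intro hb
      apply hK.2.1
      have hKle : K ≤ NC := by
        have := le_iSup (fun g : G => cmap g K) 1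
        rwa [cmap_one] at this
      rw [hb] at hKle
      exact le_bot_iff.1 hKle
    have hNCnormal : NIn ⊤ NC := by
      refine ⟨le_top, fun m _ k hk => ?_⟩
      have hcm : cmap m NC = NC := by
        rw [hNC, cmap_iSup]
        have h1 : ∀ g : G, cmap m (cmap g K) = cmap (m * g) K := fun g => cmap_cmap m g K
        apply le_antisymm
        · exact iSup_le fun g => by rw [h1 g]; exact le_iSup (fun g : G => cmap g K) (m * g)
        · refine iSup_le fun g => ?_
          have : cmap g K = cmap m (cmap (m⁻¹ * g) K) := by
            rw [cmap_cmap, mul_inv_cancel_left]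
          rw [this]
          exact le_iSup (fun h : G => cmap m (cmap h K)) (m⁻¹ * g)
      rw [← hcm]
      exact mem_cmap.2 ⟨k, hk, rfl⟩
    have hNCM : NC = M := by
      rcases lt_or_eq_of_le hNCle with hlt | heq
      · exact absurd (hM.2.2 NC hNCnormal hlt) hNCbot
      · exact heq
    exact hnab fun x hx y hy => hcomm x (hNCM ▸ hx) y (hNCM ▸ hy)
  · -- K nonabelian: K is perfect, all conjugates coincide, so K is normal in G
    have hKperf : ⁅K, K⁆ = K := perfect_of_minNIn hK hKab
    have hconjeq : ∀ g : G, cmap g K = K := by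
      intro g
      by_contra hne
      refine crunch hco (cmap g K) K ?_ ?_ ?_ hKperf hK.2.1
      · intro a ha b hb
        exact (hKg g).commute_of_ne hK hne ha hb
      · exact (hKg g).inf_eq_bot hK hne
      · exact fun hb => hK.2.1 (cmap_eq_bot_iff.1 hb)
    have hKnormal : NIn ⊤ K := by
      refine ⟨le_top, fun m _ k hk => ?_⟩
      rw [← hconjeq m]
      exact mem_cmap.2 ⟨k, hk, rfl⟩
    have hKM : K = M := by
      rcases lt_or_eq_of_le (hK.1.1 : K ≤ M) with hlt | heq
      · exact absurd (hM.2.2 K hKnormal hlt) hK.2.1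
      · exact heq
    exact le_antisymm hL.1 (hKM ▸ hKL)

end PGC

theorem socle_abelian_or_simple
    {G : Type*} [Group G] [Finite G]
    (hco : IsCograph (powerGraph G)) :
    (∀ a ∈ socle G, ∀ b ∈ socle G, Commute a b) ∨
    (IsSimpleGroup (socle G) ∧ ¬ ∀ a ∈ socle G, ∀ b ∈ socle G, Commute a b) := by
  by_cases habel : ∀ a ∈ socle G, ∀ b ∈ socle G, Commute a b
  · exact Or.inl habel
  right
  refine ⟨?_, habel⟩
  -- there is a nonabelian minimal normal subgroup
  obtain ⟨M, hM, hMnab⟩ :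
      ∃ M : Subgroup G, IsMinimalNormal M ∧ ¬ ∀ x ∈ M, ∀ y ∈ M, Commute x y := by
    by_contra h
    push_neg at h
    exact habel (PGC.socle_comm fun H hH => h H hH)
  have hMmin : PGC.MinNIn ⊤ M := PGC.isMinimalNormal_iff_minNIn.1 hM
  have hMperf : ⁅M, M⁆ = M := PGC.perfect_of_minNIn hMmin hMnab
  -- every minimal normal subgroup equals M
  have huniq : ∀ H : Subgroup G, IsMinimalNormal H → H = M := by
    intro H hH
    by_contra hne
    have hHmin : PGC.MinNIn ⊤ H := PGC.isMinimalNormal_iff_minNIn.1 hH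
    refine PGC.crunch hco H M ?_ ?_ hH.2.1 hMperf hM.2.1
    · intro a ha b hb
      exact hHmin.commute_of_ne hMmin hne ha hb
    · exact hHmin.inf_eq_bot hMmin hne
  have hsocle : socle G = M := by
    apply le_antisymm
    · refine iSup_le fun H => iSup_le fun hH => ?_
      rw [huniq H hH]
    · exact le_iSup₂_of_le M hM le_rfl
  rw [hsocle]
  -- M is simple
  haveI : Nontrivial ↥M := (Subgroup.nontrivial_iff_ne_bot M).2 hM.2.1
  have hsim := PGC.minnormal_simple hco hMmin hMnab
  refine ⟨fun N hN => ?_⟩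
  set L := N.map M.subtype with hLdef
  have hLNIn : PGC.NIn M L := by
    constructor
    · exact Subgroup.map_subtype_le N
    · intro m hm k hk
      obtain ⟨n, hn, rfl⟩ := Subgroup.mem_map.1 hk
      have : (⟨m, hm⟩ : ↥M) * n * (⟨m, hm⟩ : ↥M)⁻¹ ∈ N := hN.conj_mem n hn ⟨m, hm⟩
      exact Subgroup.mem_map.2 ⟨_, this, rfl⟩
  rcases hsim L hLNIn with h | h
  · left
    apply Subgroup.map_injective M.subtype_injective
    rw [← hLdef, h, Subgroup.map_bot]
  · right
    apply Subgroup.map_injective M.subtype_injective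
    rw [← hLdef, h, ← MonoidHom.range_eq_map, Subgroup.range_subtype]
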